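/- Let r ∈ ℕ, r ≥ 1, and let L be a loss function satisfying Assumptions 1, 2' and 3. Then the asymptotic risk η̄(Ω) = ∫₀^∞ ψ(x,Ω) L(x) dx is a continuously differentiable (C¹) function of Ω on (0,∞), with dη̄/dΩ = ∫₀^∞ (∂ψ(x,Ω)/∂Ω) L(x) dx. Moreover, denoting by η̄|_r the asymptotic risk corresponding to parameter r, the derivative satisfies dη̄|_r/dΩ = r (η̄|_r(Ω) − η̄|_{r+1}(Ω)) / Ω. -/

import Mathlib

open MeasureTheory Filter Set Topology Asymptotics
open scoped ENNReal NNReal BigOperators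

/-- `ψ(x,Ω) = Ω^r e^(-Ω/x) / (x^(r+1) (r-1)!)`. -/
noncomputable def psi (r : ℕ) (x Ω : ℝ) : ℝ :=
  Ω ^ r * Real.exp (-Ω / x) / (x ^ (r + 1) * (Nat.factorial (r - 1)))

/-- Assumption 1: bounded variation on every compact subinterval of `(0,∞)`. -/
def Assumption1 (L : ℝ → ℝ) : Prop :=
  ∀ x₁ x₂ : ℝ, 0 < x₁ → x₁ < x₂ → BoundedVariationOn L (Set.Icc x₁ x₂)

/-- Assumption 2': finitely many discontinuities in `(0,∞)`. -/
def Assumption2' (L : ℝ → ℝ) : Prop :=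
  {x ∈ Set.Ioi (0 : ℝ) | ¬ ContinuousWithinAt L (Set.Ioi 0) x}.Finite

/-- Assumption 3: `L(x) = O(x^K)` as `x → 0⁺` for some `K ∈ ℝ`, and
`L(x) = O(x^K')` as `x → ∞` for some `K' < r`. -/
def Assumption3 (r : ℕ) (L : ℝ → ℝ) : Prop :=
  (∃ K : ℝ, L =O[𝓝[>] (0 : ℝ)] fun x : ℝ => x ^ K) ∧
  (∃ K' : ℝ, K' < (r : ℝ) ∧ L =O[atTop] fun x : ℝ => x ^ K')

/-- Asymptotic risk, expressed as `η̄(Ω) = ∫₀^∞ ψ(x,Ω) L(x) dx`. -/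
noncomputable def abarPsi (r : ℕ) (L : ℝ → ℝ) (Ω : ℝ) : ℝ :=
  ∫ x in Set.Ioi (0 : ℝ), psi r x Ω * L x

section Aux
variable {L : ℝ → ℝ}

lemma L_aesm (h2 : Assumption2' L) :
    AEStronglyMeasurable L (volume.restrict (Set.Ioi (0:ℝ))) := by
  set S := {x ∈ Set.Ioi (0:ℝ) | ¬ ContinuousWithinAt L (Set.Ioi 0) x} with hS
  have hSm : MeasurableSet S := h2.measurableSet
  have hT : MeasurableSet (Set.Ioi (0:ℝ) \ S) := measurableSet_Ioi.diff hSm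
  have hcont : ContinuousOn L (Set.Ioi (0:ℝ) \ S) := by
    intro x hx
    have hc : ContinuousWithinAt L (Set.Ioi 0) x := by
      by_contra hc; exact hx.2 ⟨hx.1, hc⟩
    exact hc.mono diff_subset
  have h0 : AEStronglyMeasurable L (volume.restrict (Set.Ioi 0 \ S)) :=
    hcont.aestronglyMeasurable hT
  have hres : volume.restrict (Set.Ioi (0:ℝ) \ S) = volume.restrict (Set.Ioi 0) := by
    refine Measure.restrict_congr_set ?_
    rw [diff_ae_eq_self]
    exact measure_mono_null inter_subset_right (h2.measure_zero _)
  rwa [hres] at h0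

lemma L_bdd (h1 : Assumption1 L) {a b : ℝ} (ha : 0 < a) (hab : a < b) :
    ∃ B : ℝ, ∀ x ∈ Set.Icc a b, |L x| ≤ B := by
  refine ⟨|L a| + (eVariationOn L (Set.Icc a b)).toReal, fun x hx => ?_⟩
  have h := (h1 a b ha hab).dist_le hx (Set.left_mem_Icc.2 hab.le)
  rw [Real.dist_eq] at h
  have : |L x| ≤ |L x - L a| + |L a| := by
    have := abs_add_le (L x - L a) (L a); simpa using this
  linarith

end Aux

lemma contOn_exp_div (b : ℝ) : ContinuousOn (fun x : ℝ => Real.exp (b / x)) (Set.Ioi 0) :=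
  Real.continuous_exp.comp_continuousOn
    (continuousOn_const.div continuousOn_id fun _ hx => ne_of_gt hx)

section Aux2
variable {L : ℝ → ℝ}

lemma intAux (hL0 : ∀ x, 0 ≤ L x) (h1 : Assumption1 L) (h2 : Assumption2' L)
    {K K' : ℝ} (hK : L =O[𝓝[>] (0:ℝ)] fun x : ℝ => x ^ K)
    (hK' : L =O[atTop] fun x : ℝ => x ^ K') {n : ℕ} (hn : K' + 1 < n)
    {a : ℝ} (ha : 0 < a) :
    IntegrableOn (fun x => Real.exp (-a / x) / x ^ n * L x) (Set.Ioi (0:ℝ)) := by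
  set f : ℝ → ℝ := fun x => Real.exp (-a / x) / x ^ n * L x with hf
  have hfm : AEStronglyMeasurable f (volume.restrict (Set.Ioi 0)) := by
    refine AEStronglyMeasurable.mul ?_ (L_aesm h2)
    refine ContinuousOn.aestronglyMeasurable ?_ measurableSet_Ioi
    exact (contOn_exp_div (-a)).div (continuousOn_pow n)
      (fun x hx => pow_ne_zero _ (ne_of_gt hx))
  have hfnn : ∀ x ∈ Set.Ioi (0:ℝ), 0 ≤ f x := fun x hx =>
    mul_nonneg (div_nonneg (Real.exp_pos _).le (pow_nonneg (le_of_lt hx) _)) (hL0 x)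
  -- near zero
  obtain ⟨c, hc⟩ := hK.bound
  have ht : Tendsto (fun x : ℝ => Real.exp (-a / x) * x ^ (K - (n:ℝ))) (𝓝[>] 0) (𝓝 0) := by
    have h0 : Tendsto (fun y : ℝ => y ^ ((n : ℝ) - K) * Real.exp (-a * y)) atTop (𝓝 0) :=
      tendsto_rpow_mul_exp_neg_mul_atTop_nhds_zero _ a ha
    refine (h0.comp tendsto_inv_nhdsGT_zero).congr' ?_
    filter_upwards [self_mem_nhdsWithin] with x hx
    have hx0 : (0:ℝ) < x := hx
    simp only [Function.comp]
    rw [Real.inv_rpow hx0.le, ← Real.rpow_neg hx0.le, neg_sub, mul_comm,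
      ← div_eq_mul_inv]
  have hev : ∀ᶠ x in 𝓝[>] (0:ℝ), f x ≤ max c 0 := by
    filter_upwards [hc, ht.eventually_le_const zero_lt_one, self_mem_nhdsWithin]
      with x hLx hex hx
    have hx0 : (0:ℝ) < x := hx
    have hLx' : L x ≤ c * x ^ K := by
      rwa [Real.norm_eq_abs, abs_of_nonneg (hL0 x), Real.norm_eq_abs,
        abs_of_nonneg (Real.rpow_nonneg hx0.le _)] at hLx
    have key : f x ≤ c * (Real.exp (-a/x) * x ^ (K - (n:ℝ))) := by
      have h' : f x ≤ Real.exp (-a/x) / x^n * (c * x ^ K) :=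
        mul_le_mul_of_nonneg_left hLx'
          (div_nonneg (Real.exp_pos _).le (pow_nonneg hx0.le _))
      refine h'.trans_eq ?_
      rw [Real.rpow_sub hx0, ← Real.rpow_natCast x n]
      ring
    have h2' : f x ≤ max c 0 * (Real.exp (-a/x) * x ^ (K - (n:ℝ))) :=
      key.trans (mul_le_mul_of_nonneg_right (le_max_left _ _)
        (mul_nonneg (Real.exp_pos _).le (Real.rpow_nonneg hx0.le _)))
    calc f x ≤ max c 0 * (Real.exp (-a/x) * x ^ (K - (n:ℝ))) := h2'
      _ ≤ max c 0 * 1 := mul_le_mul_of_nonneg_left hex (le_max_right c 0)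
      _ = max c 0 := mul_one _
  obtain ⟨u, hu, hsub⟩ := mem_nhdsGT_iff_exists_Ioo_subset.1 hev
  have hu0 : (0:ℝ) < u := hu
  have int1 : IntegrableOn f (Set.Ioo 0 u) := by
    refine Integrable.mono' (g := fun _ => max c 0)
      (integrableOn_const measure_Ioo_lt_top.ne)
      (hfm.mono_measure (Measure.restrict_mono Set.Ioo_subset_Ioi_self le_rfl)) ?_
    refine (ae_restrict_iff' measurableSet_Ioo).2 (ae_of_all _ fun x hx => ?_)
    rw [Real.norm_eq_abs, abs_of_nonneg (hfnn x hx.1)]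
    exact hsub hx
  -- tail
  obtain ⟨c', hc'⟩ := hK'.bound
  obtain ⟨M₀, hM₀⟩ := eventually_atTop.1 hc'
  set M : ℝ := max M₀ u + 1 with hM
  have huM : u < M := lt_of_le_of_lt (le_max_right _ _) (lt_add_one _)
  have hM₀M : M₀ ≤ M := le_of_lt (lt_of_le_of_lt (le_max_left _ _) (lt_add_one _))
  have hMpos : (0:ℝ) < M := hu0.trans huM
  have int3 : IntegrableOn f (Set.Ioi M) := by
    have hint : IntegrableOn (fun x : ℝ => |c'| * x ^ (K' - (n:ℝ))) (Set.Ioi M) :=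
      (integrableOn_Ioi_rpow_of_lt (by linarith) hMpos).const_mul _
    refine Integrable.mono' hint
      (hfm.mono_measure (Measure.restrict_mono (fun x hx => hMpos.trans hx) le_rfl)) ?_
    refine (ae_restrict_iff' measurableSet_Ioi).2 (ae_of_all _ fun x hx => ?_)
    have hx0 : (0:ℝ) < x := hMpos.trans hx
    rw [Real.norm_eq_abs, abs_of_nonneg (hfnn x hx0)]
    have hLx : L x ≤ |c'| * x ^ K' := by
      have := hM₀ x (hM₀M.trans (le_of_lt hx))
      rw [Real.norm_eq_abs, abs_of_nonneg (hL0 x), Real.norm_eq_abs,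
        abs_of_nonneg (Real.rpow_nonneg hx0.le _)] at this
      exact this.trans (mul_le_mul_of_nonneg_right (le_abs_self c')
        (Real.rpow_nonneg hx0.le _))
    have hexp1 : Real.exp (-a / x) ≤ 1 :=
      Real.exp_le_one_iff.2 (div_nonpos_of_nonpos_of_nonneg (by linarith) hx0.le)
    calc f x ≤ Real.exp (-a/x) / x^n * (|c'| * x ^ K') :=
          mul_le_mul_of_nonneg_left hLx
            (div_nonneg (Real.exp_pos _).le (pow_nonneg hx0.le _))
      _ ≤ 1 / x^n * (|c'| * x ^ K') := by
          gcongr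
      _ = |c'| * x ^ (K' - (n:ℝ)) := by
          rw [Real.rpow_sub hx0, ← Real.rpow_natCast x n]; ring
  -- middle
  obtain ⟨B, hB⟩ := L_bdd h1 hu0 huM
  have int2 : IntegrableOn f (Set.Icc u M) := by
    refine Integrable.mono' (g := fun _ => 1 / u ^ n * B)
      (integrableOn_const measure_Icc_lt_top.ne)
      (hfm.mono_measure (Measure.restrict_mono (fun x hx => hu0.trans_le hx.1) le_rfl))
      ((ae_restrict_iff' measurableSet_Icc).2 (ae_of_all _ fun x hx => ?_))
    have hx0 : (0:ℝ) < x := hu0.trans_le hx.1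
    rw [Real.norm_eq_abs, abs_of_nonneg (hfnn x hx0)]
    have hexp1 : Real.exp (-a / x) ≤ 1 :=
      Real.exp_le_one_iff.2 (div_nonpos_of_nonpos_of_nonneg (by linarith) hx0.le)
    have hd : Real.exp (-a/x) / x ^ n ≤ 1 / u ^ n :=
      div_le_div₀ zero_le_one hexp1 (pow_pos hu0 n) (pow_le_pow_left₀ hu0.le hx.1 n)
    have : f x ≤ 1 / u ^ n * B :=
      mul_le_mul hd ((le_abs_self _).trans (hB x hx)) (hL0 x) (by positivity)
    exact this
  exact ((int1.union int2).union int3).mono_set (by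
    intro x hx
    rcases lt_or_ge x u with h | h
    · exact Or.inl (Or.inl ⟨hx, h⟩)
    · rcases le_or_gt x M with h' | h'
      · exact Or.inl (Or.inr ⟨h, h'⟩)
      · exact Or.inr h')

end Aux2

noncomputable def psiD (ρ : ℕ) (x Ω : ℝ) : ℝ :=
  ((ρ:ℝ) * Ω ^ (ρ-1) * Real.exp (-Ω/x) + Ω ^ ρ * (Real.exp (-Ω/x) * (-1/x))) /
    (x ^ (ρ+1) * (Nat.factorial (ρ-1)))

lemma hasDerivAt_psi (ρ : ℕ) {x : ℝ} (hx : x ≠ 0) (Ω : ℝ) :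
    HasDerivAt (fun w : ℝ => psi ρ x w) (psiD ρ x Ω) Ω := by
  have hexp : HasDerivAt (fun w : ℝ => Real.exp (-w / x))
      (Real.exp (-Ω / x) * (-1 / x)) Ω := ((hasDerivAt_id Ω).neg.div_const x).exp
  have h := ((hasDerivAt_pow ρ Ω).mul hexp).div_const
    ((x : ℝ) ^ (ρ+1) * (Nat.factorial (ρ-1)))
  simpa [psi, psiD] using h

lemma psiD_eq {ρ : ℕ} (hρ : 1 ≤ ρ) {x Ω : ℝ} (hx : 0 < x) (hΩ : 0 < Ω) :
    psiD ρ x Ω = (ρ:ℝ) * (psi ρ x Ω - psi (ρ+1) x Ω) / Ω := by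
  obtain ⟨m, rfl⟩ : ∃ m, ρ = m + 1 := ⟨ρ - 1, by omega⟩
  have hfac : (Nat.factorial m : ℝ) ≠ 0 := Nat.cast_ne_zero.2 (Nat.factorial_ne_zero m)
  have hx0 : x ≠ 0 := ne_of_gt hx
  have hΩ0 : Ω ≠ 0 := ne_of_gt hΩ
  simp only [psi, psiD, Nat.add_sub_cancel, Nat.factorial_succ]
  field_simp
  push_cast
  ring

lemma psiD_bound {ρ : ℕ} {L : ℝ → ℝ} (hL0 : ∀ x, 0 ≤ L x) {Ω : ℝ} (hΩ : 0 < Ω)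
    {x : ℝ} (hx : 0 < x) {w : ℝ} (hw : w ∈ Metric.ball Ω (Ω/2)) :
    ‖psiD ρ x w * L x‖ ≤
      (ρ:ℝ) * (2*Ω) ^ (ρ-1) / (Nat.factorial (ρ-1)) *
        (Real.exp (-(Ω/2) / x) / x ^ (ρ+1) * L x) +
      (2*Ω) ^ ρ / (Nat.factorial (ρ-1)) *
        (Real.exp (-(Ω/2) / x) / x ^ (ρ+2) * L x) := by
  rw [Metric.mem_ball, Real.dist_eq, abs_lt] at hw
  have hw1 : Ω/2 < w := by linarith
  have hw2 : w ≤ 2*Ω := by linarith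
  have hw0 : 0 < w := by linarith
  have hexp : Real.exp (-w / x) ≤ Real.exp (-(Ω/2) / x) :=
    Real.exp_le_exp.2 ((div_le_div_iff_of_pos_right hx).2 (by linarith))
  have hfac : (0:ℝ) < (Nat.factorial (ρ-1) : ℝ) := by
    exact_mod_cast (ρ-1).factorial_pos
  have hD : (0:ℝ) < x ^ (ρ+1) * (Nat.factorial (ρ-1)) :=
    mul_pos (pow_pos hx _) hfac
  have habs : |psiD ρ x w| ≤
      ((ρ:ℝ) * w ^ (ρ-1) * Real.exp (-w/x) +
        w ^ ρ * (Real.exp (-w/x) * (1/x))) / (x ^ (ρ+1) * (Nat.factorial (ρ-1))) := by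
    simp only [psiD]
    rw [abs_div, abs_of_pos hD]
    refine div_le_div_of_nonneg_right ?_ hD.le
    refine (abs_add_le _ _).trans (le_of_eq ?_)
    rw [abs_mul, abs_mul, abs_mul, abs_mul, Nat.abs_cast,
      abs_of_nonneg (pow_nonneg hw0.le (ρ-1)), abs_of_nonneg (pow_nonneg hw0.le ρ),
      abs_of_nonneg (Real.exp_pos (-w/x)).le, abs_div, abs_neg, abs_one, abs_of_pos hx]
  calc ‖psiD ρ x w * L x‖ = |psiD ρ x w| * L x := by
        rw [norm_mul, Real.norm_eq_abs, Real.norm_eq_abs, abs_of_nonneg (hL0 x)]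
    _ ≤ (((ρ:ℝ) * w ^ (ρ-1) * Real.exp (-w/x) +
          w ^ ρ * (Real.exp (-w/x) * (1/x))) / (x ^ (ρ+1) * (Nat.factorial (ρ-1))))
          * L x := mul_le_mul_of_nonneg_right habs (hL0 x)
    _ ≤ (((ρ:ℝ) * (2*Ω) ^ (ρ-1) * Real.exp (-(Ω/2)/x) +
          (2*Ω) ^ ρ * (Real.exp (-(Ω/2)/x) * (1/x))) / (x ^ (ρ+1) * (Nat.factorial (ρ-1))))
          * L x := by
        gcongr <;> first | exact hL0 x | positivity
    _ = (ρ:ℝ) * (2*Ω) ^ (ρ-1) / (Nat.factorial (ρ-1)) *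
          (Real.exp (-(Ω/2) / x) / x ^ (ρ+1) * L x) +
        (2*Ω) ^ ρ / (Nat.factorial (ρ-1)) *
          (Real.exp (-(Ω/2) / x) / x ^ (ρ+2) * L x) := by
        have hx0 : x ≠ 0 := ne_of_gt hx
        field_simp
        ring

section Main
variable {L : ℝ → ℝ}

lemma int_psiL (hL0 : ∀ x, 0 ≤ L x) (h1 : Assumption1 L) (h2 : Assumption2' L)
    {K K' : ℝ} (hK : L =O[𝓝[>] (0:ℝ)] fun x : ℝ => x ^ K)
    (hK' : L =O[atTop] fun x : ℝ => x ^ K') {ρ : ℕ} (hρ : K' < ρ)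
    {Ω : ℝ} (hΩ : 0 < Ω) :
    IntegrableOn (fun x => psi ρ x Ω * L x) (Set.Ioi (0:ℝ)) := by
  have h := (intAux hL0 h1 h2 hK hK' (n := ρ+1) (by push_cast; linarith) hΩ).const_mul
    (Ω ^ ρ / (Nat.factorial (ρ-1)))
  refine IntegrableOn.congr_fun h (fun x hx => ?_) measurableSet_Ioi
  have hx0 : x ≠ 0 := ne_of_gt hx
  have hfac : ((Nat.factorial (ρ-1) : ℝ)) ≠ 0 := Nat.cast_ne_zero.2 (Nat.factorial_ne_zero _)
  simp only [psi]
  field_simp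

set_option maxHeartbeats 1000000 in
lemma key (hL0 : ∀ x, 0 ≤ L x) (h1 : Assumption1 L) (h2 : Assumption2' L)
    {K K' : ℝ} (hK : L =O[𝓝[>] (0:ℝ)] fun x : ℝ => x ^ K)
    (hK' : L =O[atTop] fun x : ℝ => x ^ K') {r : ℕ} (hr : K' < r)
    {Ω : ℝ} (hΩ : 0 < Ω) :
    HasDerivAt (abarPsi r L) (∫ x in Set.Ioi (0:ℝ), psiD r x Ω * L x) Ω := by
  have hfacne : ((Nat.factorial (r-1) : ℝ)) ≠ 0 := Nat.cast_ne_zero.2 (Nat.factorial_ne_zero _)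
  have hF_meas : ∀ᶠ w in 𝓝 Ω,
      AEStronglyMeasurable (fun x => psi r x w * L x) (volume.restrict (Set.Ioi 0)) := by
    refine Eventually.of_forall fun w => AEStronglyMeasurable.mul ?_ (L_aesm h2)
    refine ContinuousOn.aestronglyMeasurable ?_ measurableSet_Ioi
    simp only [psi]
    exact (continuousOn_const.mul (contOn_exp_div (-w))).div
      ((continuousOn_pow _).mul continuousOn_const)
      (fun x hx => mul_ne_zero (pow_ne_zero _ (ne_of_gt hx)) hfacne)
  have hF_int : IntegrableOn (fun x => psi r x Ω * L x) (Set.Ioi (0:ℝ)) :=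
    int_psiL hL0 h1 h2 hK hK' hr hΩ
  have hF'_meas : AEStronglyMeasurable (fun x => psiD r x Ω * L x)
      (volume.restrict (Set.Ioi 0)) := by
    refine AEStronglyMeasurable.mul ?_ (L_aesm h2)
    refine ContinuousOn.aestronglyMeasurable ?_ measurableSet_Ioi
    simp only [psiD]
    refine ContinuousOn.div ?_ ((continuousOn_pow _).mul continuousOn_const)
      (fun x hx => mul_ne_zero (pow_ne_zero _ (ne_of_gt hx)) hfacne)
    exact (continuousOn_const.mul (contOn_exp_div (-Ω))).add
      (continuousOn_const.mul ((contOn_exp_div (-Ω)).mul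
        (continuousOn_const.div continuousOn_id fun x hx => ne_of_gt hx)))
  have h_bound : ∀ᵐ x ∂(volume.restrict (Set.Ioi (0:ℝ))),
      ∀ w ∈ Metric.ball Ω (Ω/2), ‖psiD r x w * L x‖ ≤
        (r:ℝ) * (2*Ω) ^ (r-1) / (Nat.factorial (r-1)) *
          (Real.exp (-(Ω/2) / x) / x ^ (r+1) * L x) +
        (2*Ω) ^ r / (Nat.factorial (r-1)) *
          (Real.exp (-(Ω/2) / x) / x ^ (r+2) * L x) := by
    refine (ae_restrict_iff' measurableSet_Ioi).2 (ae_of_all _ fun x hx w hw => ?_)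
    exact psiD_bound hL0 hΩ hx hw
  have bound_int : Integrable (fun x =>
        (r:ℝ) * (2*Ω) ^ (r-1) / (Nat.factorial (r-1)) *
          (Real.exp (-(Ω/2) / x) / x ^ (r+1) * L x) +
        (2*Ω) ^ r / (Nat.factorial (r-1)) *
          (Real.exp (-(Ω/2) / x) / x ^ (r+2) * L x))
      (volume.restrict (Set.Ioi (0:ℝ))) := by
    have i1 := (intAux hL0 h1 h2 hK hK' (n := r+1) (by push_cast; linarith)
      (half_pos hΩ)).const_mul ((r:ℝ) * (2*Ω) ^ (r-1) / (Nat.factorial (r-1)))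
    have i2 := (intAux hL0 h1 h2 hK hK' (n := r+2) (by push_cast; linarith)
      (half_pos hΩ)).const_mul ((2*Ω) ^ r / (Nat.factorial (r-1)))
    simpa [neg_div, Pi.add_def] using i1.add i2
  have h_diff : ∀ᵐ x ∂(volume.restrict (Set.Ioi (0:ℝ))),
      ∀ w ∈ Metric.ball Ω (Ω/2),
        HasDerivAt (fun w => psi r x w * L x) (psiD r x w * L x) w := by
    refine (ae_restrict_iff' measurableSet_Ioi).2 (ae_of_all _ fun x hx w _ => ?_)
    exact (hasDerivAt_psi r (ne_of_gt hx) w).mul_const (L x)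
  have hmain := hasDerivAt_integral_of_dominated_loc_of_deriv_le (Metric.ball_mem_nhds Ω (half_pos hΩ))
    hF_meas hF_int hF'_meas h_bound bound_int h_diff
  exact hmain.2

end Main

/-- Proposition 1: the asymptotic risk `η̄` is a `C¹` function of
`Ω` on `(0,∞)`, with `dη̄/dΩ = ∫₀^∞ (∂ψ/∂Ω)(x,Ω) L(x) dx`, and this derivative
equals `r (η̄|_r(Ω) − η̄|_{r+1}(Ω)) / Ω`. -/
theorem stmt1 (r : ℕ) (hr : 1 ≤ r) (L : ℝ → ℝ) (hL0 : ∀ x : ℝ, 0 ≤ L x)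
    (h1 : Assumption1 L) (h2 : Assumption2' L) (h3 : Assumption3 r L) :
    ContDiffOn ℝ 1 (abarPsi r L) (Set.Ioi (0 : ℝ)) ∧
    ∀ Ω : ℝ, 0 < Ω →
      HasDerivAt (abarPsi r L)
        (∫ x in Set.Ioi (0 : ℝ), deriv (fun w : ℝ => psi r x w) Ω * L x) Ω ∧
      (∫ x in Set.Ioi (0 : ℝ), deriv (fun w : ℝ => psi r x w) Ω * L x)
        = (r : ℝ) * (abarPsi r L Ω - abarPsi (r + 1) L Ω) / Ω := by
  obtain ⟨⟨K, hK⟩, K', hK'r, hK'⟩ := h3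
  have hK'r1 : K' < ((r+1 : ℕ) : ℝ) := by push_cast; linarith
  have hpt : ∀ Ω : ℝ, 0 < Ω →
      (∫ x in Set.Ioi (0:ℝ), deriv (fun w : ℝ => psi r x w) Ω * L x)
        = ∫ x in Set.Ioi (0:ℝ), psiD r x Ω * L x := fun Ω hΩ =>
    setIntegral_congr_fun measurableSet_Ioi fun x hx => by
      rw [(hasDerivAt_psi r (ne_of_gt hx) Ω).deriv]
  have heq : ∀ Ω : ℝ, 0 < Ω →
      (∫ x in Set.Ioi (0:ℝ), psiD r x Ω * L x)
        = (r : ℝ) * (abarPsi r L Ω - abarPsi (r+1) L Ω) / Ω := by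
    intro Ω hΩ
    have e1 : ∀ x ∈ Set.Ioi (0:ℝ), psiD r x Ω * L x
        = (r:ℝ)/Ω * (psi r x Ω * L x - psi (r+1) x Ω * L x) := fun x hx => by
      rw [psiD_eq hr hx hΩ]; ring
    rw [setIntegral_congr_fun measurableSet_Ioi e1, MeasureTheory.integral_const_mul,
      integral_sub (int_psiL hL0 h1 h2 hK hK' hK'r hΩ)
        (int_psiL hL0 h1 h2 hK hK' hK'r1 hΩ)]
    unfold abarPsi
    ring
  refine ⟨?_, fun Ω hΩ => ?_⟩
  · have hdiff : ∀ Ω ∈ Set.Ioi (0:ℝ), HasDerivAt (abarPsi r L)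
        ((r : ℝ) * (abarPsi r L Ω - abarPsi (r+1) L Ω) / Ω) Ω := fun Ω hΩ => by
      have h := key hL0 h1 h2 hK hK' hK'r hΩ
      rwa [heq Ω hΩ] at h
    have hd1 : ∀ Ω ∈ Set.Ioi (0:ℝ), HasDerivAt (abarPsi (r+1) L)
        (∫ x in Set.Ioi (0:ℝ), psiD (r+1) x Ω * L x) Ω := fun Ω hΩ =>
      key hL0 h1 h2 hK hK' hK'r1 hΩ
    have hcont : ContinuousOn (fun Ω => (r : ℝ) * (abarPsi r L Ω - abarPsi (r+1) L Ω) / Ω)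
        (Set.Ioi (0:ℝ)) := by
      refine ContinuousOn.div ?_ continuousOn_id (fun Ω hΩ => ne_of_gt hΩ)
      refine continuousOn_const.mul (ContinuousOn.sub ?_ ?_)
      · exact fun Ω hΩ => ((hdiff Ω hΩ).continuousAt).continuousWithinAt
      · exact fun Ω hΩ => ((hd1 Ω hΩ).continuousAt).continuousWithinAt
    rw [show (1 : WithTop ℕ∞) = 0 + 1 by norm_num,
      contDiffOn_succ_iff_deriv_of_isOpen isOpen_Ioi]
    refine ⟨fun Ω hΩ => ((hdiff Ω hΩ).differentiableAt).differentiableWithinAt, ?_, ?_⟩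
    · simp
    · rw [contDiffOn_zero]
      exact hcont.congr fun Ω hΩ => (hdiff Ω hΩ).deriv
  · refine ⟨?_, (hpt Ω hΩ).trans (heq Ω hΩ)⟩
    rw [hpt Ω hΩ]
    exact key hL0 h1 h2 hK hK' hK'r hΩ
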